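/- Let u(x,t) = ∫_{ℝⁿ} (4πt)^{-n/2} exp(-|x-ξ|²/(4t)) dμ(ξ) be a nonnegative heat extension of a Radon measure μ on ℝⁿ and let α ∈ [0,n]. Then the set T_α(u) = { x ∈ ℝⁿ : limsup_{t→0⁺} t^{α/2} u(x,t) > 0 } has Hausdorff dimension at most n − α. -/

import Mathlib

open MeasureTheory Filter Metric Set

noncomputable def heatK (n : ℕ) (x : EuclideanSpace ℝ (Fin n)) (t : ℝ) : ℝ :=
  (4 * Real.pi * t) ^ (-(n : ℝ) / 2) * Real.exp (-‖x‖ ^ 2 / (4 * t))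

open scoped ENNReal NNReal Topology

variable {n : ℕ}
local notation "X" => EuclideanSpace ℝ (Fin n)

lemma cover_step (d : ℝ) (ν : Measure (EuclideanSpace ℝ (Fin n)))
    (c : ℝ≥0∞) (j : ℕ) (A : Set (EuclideanSpace ℝ (Fin n)))
    (hA : ∀ x ∈ A, x ∈ closedBall (0:EuclideanSpace ℝ (Fin n)) j ∧
      ∃ᶠ r in 𝓝[>] (0:ℝ), c * ENNReal.ofReal (r ^ d) ≤ ν (closedBall x r))
    {δ : ℝ} (hδ0 : 0 < δ) (hδ1 : δ ≤ 1) :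
    ∃ u : Set (EuclideanSpace ℝ (Fin n)), u.Countable ∧
      ∃ ρ : EuclideanSpace ℝ (Fin n) → ℝ,
        (∀ b ∈ u, 0 < ρ b ∧ ρ b < δ ∧ c * ENNReal.ofReal (ρ b ^ d) ≤ ν (closedBall b (ρ b))) ∧
        (A ⊆ ⋃ b ∈ u, closedBall b (4 * ρ b)) ∧
        (u.PairwiseDisjoint fun b => closedBall b (ρ b)) ∧
        (∀ b ∈ u, closedBall b (ρ b) ⊆ closedBall (0:EuclideanSpace ℝ (Fin n)) (j+1)) := by
  classical
  set P : (EuclideanSpace ℝ (Fin n)) → ℝ → Prop := fun x r =>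
    0 < r ∧ r < δ ∧ c * ENNReal.ofReal (r ^ d) ≤ ν (closedBall x r) with hP
  have hex : ∀ x ∈ A, ∃ r, P x r := by
    intro x hx
    have hfreq := (hA x hx).2
    have : ∃ᶠ r in 𝓝[>] (0:ℝ), (c * ENNReal.ofReal (r ^ d) ≤ ν (closedBall x r)) ∧ r ∈ Ioo 0 δ := by
      refine hfreq.and_eventually ?_
      filter_upwards [Ioo_mem_nhdsGT_of_mem (by simp [hδ0] : (0:ℝ) ∈ Ico (0:ℝ) δ)] with r hr
      exact hr
    rcases this.exists with ⟨r, h1, h2⟩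
    exact ⟨r, h2.1, h2.2, h1⟩
  set ρ : (EuclideanSpace ℝ (Fin n)) → ℝ := fun x =>
    if h : ∃ r, P x r then h.choose else 0 with hρ
  have hρP : ∀ x ∈ A, P x (ρ x) := by
    intro x hx
    have h := hex x hx
    simp only [hρ, dif_pos h]
    exact h.choose_spec
  have hρδ : ∀ x ∈ A, ρ x ≤ δ := fun x hx => (hρP x hx).2.1.le
  obtain ⟨u, huA, hdisj, hcov⟩ :=
    Vitali.exists_disjoint_subfamily_covering_enlargement_closedBall A id ρ δ
      (fun a ha => hρδ a ha) 4 (by norm_num)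
  refine ⟨u, ?_, ρ, fun b hb => hρP b (huA hb), ?_, hdisj, ?_⟩
  · have hdisj' : u.PairwiseDisjoint fun b => ball b (ρ b) :=
      hdisj.mono fun b => ball_subset_closedBall
    exact hdisj'.countable_of_isOpen (fun b _ => isOpen_ball)
      (fun b hb => (nonempty_ball).2 (hρP b (huA hb)).1)
  · intro a ha
    rcases hcov a ha with ⟨b, hb, hsub⟩
    have : a ∈ closedBall (id a) (ρ a) := mem_closedBall_self (hρP a ha).1.le
    exact mem_biUnion hb (hsub this)
  · intro b hb x hx
    have hbj : b ∈ closedBall (0:EuclideanSpace ℝ (Fin n)) j := (hA b (huA hb)).1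
    have : dist x (0:EuclideanSpace ℝ (Fin n)) ≤ dist x b + dist b 0 := dist_triangle _ _ _
    have h1 : dist x b ≤ ρ b := mem_closedBall.1 hx
    have h2 : dist b (0:EuclideanSpace ℝ (Fin n)) ≤ j := mem_closedBall.1 hbj
    have h3 : ρ b ≤ 1 := le_trans (hρδ b (huA hb)) hδ1
    exact mem_closedBall.2 (by linarith)

lemma hmeas_zero (d : ℝ) (hd : 0 ≤ d) (ν : Measure (EuclideanSpace ℝ (Fin n)))
    (c : ℝ≥0∞) (hc0 : 0 < c) (hctop : c ≠ ⊤) (j : ℕ)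
    (hν : ν (closedBall (0:EuclideanSpace ℝ (Fin n)) (j+1)) ≠ ⊤)
    (A : Set (EuclideanSpace ℝ (Fin n)))
    (hA : ∀ x ∈ A, x ∈ closedBall (0:EuclideanSpace ℝ (Fin n)) j ∧
      ∃ᶠ r in 𝓝[>] (0:ℝ), c * ENNReal.ofReal (r ^ d) ≤ ν (closedBall x r))
    (d' : ℝ) (hd' : d < d') : μH[d'] A = 0 := by
  classical
  set δ : ℕ → ℝ := fun k => 1 / (k + 1) with hδdef
  have hδ0 : ∀ k, 0 < δ k := fun k => by positivity
  have hδ1 : ∀ k, δ k ≤ 1 := fun k => by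
    rw [hδdef]
    rw [div_le_one (by positivity)]
    linarith [Nat.cast_nonneg (α := ℝ) k]
  have key : ∀ k : ℕ, ∃ u : Set (EuclideanSpace ℝ (Fin n)), u.Countable ∧
      ∃ ρ : EuclideanSpace ℝ (Fin n) → ℝ,
        (∀ b ∈ u, 0 < ρ b ∧ ρ b < δ k ∧ c * ENNReal.ofReal (ρ b ^ d) ≤ ν (closedBall b (ρ b))) ∧
        (A ⊆ ⋃ b ∈ u, closedBall b (4 * ρ b)) ∧
        (u.PairwiseDisjoint fun b => closedBall b (ρ b)) ∧
        (∀ b ∈ u, closedBall b (ρ b) ⊆ closedBall (0:EuclideanSpace ℝ (Fin n)) (j+1)) :=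
    fun k => cover_step d ν c j A hA (hδ0 k) (hδ1 k)
  choose u hu ρ hρ hcov hdisj hsub using key
  haveI : ∀ k, Countable ↥(u k) := fun k => (hu k).to_subtype
  set K : ℝ≥0∞ := ENNReal.ofReal 8 ^ d * c⁻¹ * ν (closedBall (0:EuclideanSpace ℝ (Fin n)) (j+1))
    with hK
  have hKtop : K ≠ ⊤ := by
    rw [hK]
    refine ENNReal.mul_ne_top (ENNReal.mul_ne_top ?_ ?_) hν
    · exact ENNReal.rpow_ne_top_of_nonneg hd ENNReal.ofReal_ne_top
    · exact ENNReal.inv_ne_top.2 hc0.ne'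
  have hdiam : ∀ k, ∀ i : ↥(u k),
      EMetric.diam (closedBall (i : EuclideanSpace ℝ (Fin n)) (4 * ρ k i)) ≤
        ENNReal.ofReal (8 * δ k) := by
    intro k i
    refine EMetric.diam_le fun x hx y hy => ?_
    rw [edist_dist]
    have h1 : dist x (i : EuclideanSpace ℝ (Fin n)) ≤ 4 * ρ k i := mem_closedBall.1 hx
    have h2 : dist y (i : EuclideanSpace ℝ (Fin n)) ≤ 4 * ρ k i := mem_closedBall.1 hy
    have h3 : ρ k i < δ k := (hρ k i i.2).2.1
    have := dist_triangle x (i : EuclideanSpace ℝ (Fin n)) y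
    rw [dist_comm (i : EuclideanSpace ℝ (Fin n)) y] at this
    exact ENNReal.ofReal_le_ofReal (by linarith)
  have hsum : ∀ k, (∑' i : ↥(u k),
      EMetric.diam (closedBall (i : EuclideanSpace ℝ (Fin n)) (4 * ρ k i)) ^ d') ≤
      ENNReal.ofReal (8 * δ k) ^ (d' - d) * K := by
    intro k
    have step1 : ∀ i : ↥(u k),
        EMetric.diam (closedBall (i : EuclideanSpace ℝ (Fin n)) (4 * ρ k i)) ^ d' ≤
        ENNReal.ofReal (8 * δ k) ^ (d' - d) * (ENNReal.ofReal 8 ^ d * c⁻¹ *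
          ν (closedBall (i : EuclideanSpace ℝ (Fin n)) (ρ k i))) := by
      intro i
      obtain ⟨hr0, hrδ, hrν⟩ := hρ k i i.2
      set r := ρ k i
      have h8r : (0:ℝ) < 8 * r := by linarith
      calc EMetric.diam (closedBall (i : EuclideanSpace ℝ (Fin n)) (4 * r)) ^ d'
          ≤ ENNReal.ofReal (8 * r) ^ d' := by
            refine ENNReal.rpow_le_rpow ?_ (by linarith)
            refine EMetric.diam_le fun x hx y hy => ?_
            rw [edist_dist]
            have h1 : dist x (i : EuclideanSpace ℝ (Fin n)) ≤ 4 * r := mem_closedBall.1 hx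
            have h2 : dist y (i : EuclideanSpace ℝ (Fin n)) ≤ 4 * r := mem_closedBall.1 hy
            have := dist_triangle x (i : EuclideanSpace ℝ (Fin n)) y
            rw [dist_comm (i : EuclideanSpace ℝ (Fin n)) y] at this
            exact ENNReal.ofReal_le_ofReal (by linarith)
        _ = ENNReal.ofReal (8 * r) ^ (d' - d) * ENNReal.ofReal (8 * r) ^ d := by
            rw [← ENNReal.rpow_add _ _ (ENNReal.ofReal_pos.2 h8r).ne' ENNReal.ofReal_ne_top]
            congr 1
            ring
        _ ≤ ENNReal.ofReal (8 * δ k) ^ (d' - d) * (ENNReal.ofReal 8 ^ d * c⁻¹ *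
            ν (closedBall (i : EuclideanSpace ℝ (Fin n)) (ρ k i))) := by
            refine mul_le_mul' ?_ ?_
            · exact ENNReal.rpow_le_rpow (ENNReal.ofReal_le_ofReal (by linarith)) (by linarith)
            · have e1 : ENNReal.ofReal (8 * r) ^ d =
                  ENNReal.ofReal 8 ^ d * ENNReal.ofReal (r ^ d) := by
                rw [ENNReal.ofReal_mul (by norm_num), ENNReal.mul_rpow_of_nonneg _ _ hd,
                  ENNReal.ofReal_rpow_of_pos hr0]
              rw [e1, mul_assoc]
              refine mul_le_mul' le_rfl ?_
              calc ENNReal.ofReal (r ^ d) = c⁻¹ * (c * ENNReal.ofReal (r ^ d)) := by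
                    rw [← mul_assoc, ENNReal.inv_mul_cancel hc0.ne' hctop, one_mul]
                _ ≤ c⁻¹ * ν (closedBall (i : EuclideanSpace ℝ (Fin n)) (ρ k i)) :=
                    mul_le_mul' le_rfl hrν
    calc (∑' i : ↥(u k),
        EMetric.diam (closedBall (i : EuclideanSpace ℝ (Fin n)) (4 * ρ k i)) ^ d')
        ≤ ∑' i : ↥(u k), ENNReal.ofReal (8 * δ k) ^ (d' - d) * (ENNReal.ofReal 8 ^ d * c⁻¹ *
            ν (closedBall (i : EuclideanSpace ℝ (Fin n)) (ρ k i))) :=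
          ENNReal.tsum_le_tsum step1
      _ = ENNReal.ofReal (8 * δ k) ^ (d' - d) * (ENNReal.ofReal 8 ^ d * c⁻¹ *
            ∑' i : ↥(u k), ν (closedBall (i : EuclideanSpace ℝ (Fin n)) (ρ k i))) := by
          rw [ENNReal.tsum_mul_left, ENNReal.tsum_mul_left]
      _ ≤ ENNReal.ofReal (8 * δ k) ^ (d' - d) * K := by
          refine mul_le_mul' le_rfl ?_
          rw [hK, mul_assoc, mul_assoc]
          refine mul_le_mul' le_rfl (mul_le_mul' le_rfl ?_)
          calc (∑' i : ↥(u k), ν (closedBall (i : EuclideanSpace ℝ (Fin n)) (ρ k i)))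
              = ν (⋃ b ∈ u k, closedBall b (ρ k b)) :=
                (measure_biUnion (hu k) (hdisj k) fun b _ => measurableSet_closedBall).symm
            _ ≤ ν (closedBall (0:EuclideanSpace ℝ (Fin n)) (j+1)) :=
                measure_mono (iUnion₂_subset (hsub k))
  have hHle := Measure.hausdorffMeasure_le_liminf_tsum (l := atTop) d' A
      (fun k => ENNReal.ofReal (8 * δ k))
      (by
        rw [← ENNReal.ofReal_zero]
        refine ENNReal.tendsto_ofReal ?_
        have : Tendsto (fun k : ℕ => 1 / ((k:ℝ) + 1)) atTop (𝓝 0) :=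
          tendsto_one_div_add_atTop_nhds_zero_nat
        simpa [hδdef, one_div] using this.const_mul (8:ℝ))
      (fun k (i : ↥(u k)) => closedBall (i : EuclideanSpace ℝ (Fin n)) (4 * ρ k i))
      (Eventually.of_forall fun k => hdiam k)
      (Eventually.of_forall fun k => by
        intro x hx
        rcases mem_iUnion₂.1 (hcov k hx) with ⟨b, hb, hxb⟩
        exact mem_iUnion.2 ⟨⟨b, hb⟩, hxb⟩)
  refine le_antisymm ?_ zero_le
  refine hHle.trans ?_
  have hG : Tendsto (fun k => ENNReal.ofReal (8 * δ k) ^ (d' - d) * K) atTop (𝓝 0) := by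
    have h1 : Tendsto (fun k => ENNReal.ofReal (8 * δ k) ^ (d' - d)) atTop (𝓝 0) := by
      have e : ∀ k, ENNReal.ofReal (8 * δ k) ^ (d' - d) =
          ENNReal.ofReal ((8 * δ k) ^ (d' - d)) := fun k =>
        ENNReal.ofReal_rpow_of_pos (x := 8 * δ k) (p := d' - d)
          (by have := hδ0 k; linarith)
      simp only [e]
      rw [← ENNReal.ofReal_zero]
      refine ENNReal.tendsto_ofReal ?_
      have h2 : Tendsto (fun k : ℕ => (8 * δ k)) atTop (𝓝 0) := by
        have : Tendsto (fun k : ℕ => 1 / ((k:ℝ) + 1)) atTop (𝓝 0) :=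
          tendsto_one_div_add_atTop_nhds_zero_nat
        simpa [hδdef, one_div] using this.const_mul (8:ℝ)
      have he : (0:ℝ) < d' - d := by linarith
      have hb : Tendsto (fun k : ℕ => ((k:ℝ) + 1)) atTop atTop :=
        tendsto_atTop_add_const_right _ 1 tendsto_natCast_atTop_atTop
      have h3 : Tendsto (fun k : ℕ => ((((k:ℝ) + 1)) ^ (d' - d))⁻¹) atTop (𝓝 0) :=
        ((tendsto_rpow_atTop he).comp hb).inv_tendsto_atTop
      have h4 := h3.const_mul ((8:ℝ) ^ (d' - d))
      rw [mul_zero] at h4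
      refine h4.congr fun k => ?_
      simp only [hδdef, one_div]
      rw [← Real.inv_rpow (by positivity), ← Real.mul_rpow (by norm_num) (by positivity)]
    have := ENNReal.Tendsto.mul_const h1 (Or.inr hKtop)
    simpa using this
  calc liminf (fun k => ∑' i : ↥(u k),
        EMetric.diam (closedBall (i : EuclideanSpace ℝ (Fin n)) (4 * ρ k i)) ^ d') atTop
      ≤ liminf (fun k => ENNReal.ofReal (8 * δ k) ^ (d' - d) * K) atTop :=
        liminf_le_liminf (Eventually.of_forall hsum)
    _ = 0 := hG.liminf_eq

lemma frostman (d : ℝ) (hd : 0 ≤ d) (ν : Measure (EuclideanSpace ℝ (Fin n)))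
    (hν : ∀ j : ℕ, ν (closedBall (0:EuclideanSpace ℝ (Fin n)) (j+1)) ≠ ⊤) :
    dimH {x : EuclideanSpace ℝ (Fin n) | ∃ c : ℝ≥0∞, 0 < c ∧
      ∃ᶠ r in 𝓝[>] (0:ℝ), c * ENNReal.ofReal (r ^ d) ≤ ν (closedBall x r)} ≤
      ENNReal.ofReal d := by
  classical
  set A : ℕ → ℕ → Set (EuclideanSpace ℝ (Fin n)) := fun m j =>
    {x | x ∈ closedBall (0:EuclideanSpace ℝ (Fin n)) j ∧
      ∃ᶠ r in 𝓝[>] (0:ℝ), ((m:ℝ≥0∞)+1)⁻¹ * ENNReal.ofReal (r ^ d) ≤ ν (closedBall x r)}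
    with hAdef
  have hsub : {x : EuclideanSpace ℝ (Fin n) | ∃ c : ℝ≥0∞, 0 < c ∧
      ∃ᶠ r in 𝓝[>] (0:ℝ), c * ENNReal.ofReal (r ^ d) ≤ ν (closedBall x r)} ⊆
      ⋃ m : ℕ, ⋃ j : ℕ, A m j := by
    rintro x ⟨c, hc, hfreq⟩
    obtain ⟨m, hm⟩ := ENNReal.exists_inv_nat_lt hc.ne'
    obtain ⟨j, hj⟩ := exists_nat_ge ‖x‖
    refine mem_iUnion.2 ⟨m, mem_iUnion.2 ⟨j, ?_, ?_⟩⟩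
    · exact mem_closedBall_zero_iff.2 hj
    · refine hfreq.mono fun r hr => le_trans (mul_le_mul_left ?_ _) hr
      calc ((m:ℝ≥0∞)+1)⁻¹ ≤ (m:ℝ≥0∞)⁻¹ := ENNReal.inv_le_inv.2 le_self_add
        _ ≤ c := hm.le
  refine le_trans (dimH_mono hsub) ?_
  rw [dimH_iUnion]
  refine iSup_le fun m => ?_
  rw [dimH_iUnion]
  refine iSup_le fun j => ?_
  refine dimH_le fun d' hd' => ?_
  by_contra hcon
  have hdd' : d < (d' : ℝ) := by
    rw [not_le] at hcon
    have := (ENNReal.ofReal_lt_iff_lt_toReal hd ENNReal.coe_ne_top).1 hcon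
    simpa using this
  have := hmeas_zero d hd ν ((m:ℝ≥0∞)+1)⁻¹
    (ENNReal.inv_pos.2 (by simp))
    (by simp)
    j (hν j) (A m j) (fun x hx => hx) (d' : ℝ) hdd'
  rw [this] at hd'
  exact (ENNReal.zero_ne_top hd' :)

lemma near_bound (μ : Measure (EuclideanSpace ℝ (Fin n))) (x : EuclideanSpace ℝ (Fin n))
    (d : ℝ) (hd : 0 ≤ d) (ε : ℝ≥0∞) (R t : ℝ) (ht : 0 < t) (hR : 0 < R)
    (hball : ∀ r : ℝ, 0 < r → r ≤ R → μ (closedBall x r) ≤ ε * ENNReal.ofReal (r ^ d)) :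
    ∫⁻ ξ in closedBall x R, ENNReal.ofReal (heatK n (x - ξ) t) ∂μ ≤
      ENNReal.ofReal ((4 * Real.pi * t) ^ (-(n : ℝ) / 2) * t ^ (d / 2)) * ε *
        ∑' k : ℕ, ENNReal.ofReal (Real.exp (-(k:ℝ)^2 / 4) * ((k:ℝ) + 1) ^ d) := by
  classical
  set s := Real.sqrt t with hsdef
  have hs0 : 0 < s := Real.sqrt_pos.2 ht
  have hst : s ^ 2 = t := Real.sq_sqrt ht.le
  set S : ℕ → Set (EuclideanSpace ℝ (Fin n)) := fun k =>
    closedBall x R ∩ (closedBall x (((k:ℝ)+1)*s) \ ball x ((k:ℝ)*s)) with hSdef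
  have hSmeas : ∀ k, MeasurableSet (S k) := fun k =>
    (measurableSet_closedBall.inter (measurableSet_closedBall.diff measurableSet_ball))
  have hcover : closedBall x R ⊆ ⋃ k, S k := by
    intro ξ hξ
    set k := ⌊dist ξ x / s⌋₊ with hkdef
    have hd0 : 0 ≤ dist ξ x / s := div_nonneg dist_nonneg hs0.le
    have h1 : (k:ℝ) * s ≤ dist ξ x := by
      rw [← le_div_iff₀ hs0]
      exact Nat.floor_le hd0
    have h2 : dist ξ x < ((k:ℝ)+1) * s := by
      rw [← div_lt_iff₀ hs0]
      exact Nat.lt_floor_add_one _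
    refine mem_iUnion.2 ⟨k, hξ, mem_closedBall.2 h2.le, fun hball' => ?_⟩
    exact absurd (mem_ball.1 hball') (not_lt.2 h1)
  have hAnn : (0:ℝ) ≤ (4 * Real.pi * t) ^ (-(n : ℝ) / 2) :=
    Real.rpow_nonneg (by positivity) _
  have step : ∀ k : ℕ, ∫⁻ ξ in S k, ENNReal.ofReal (heatK n (x - ξ) t) ∂μ ≤
      (ENNReal.ofReal ((4 * Real.pi * t) ^ (-(n : ℝ) / 2) * t ^ (d / 2)) * ε) *
        ENNReal.ofReal (Real.exp (-(k:ℝ)^2 / 4) * ((k:ℝ) + 1) ^ d) := by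
    intro k
    have hconst : ∀ ξ ∈ S k, ENNReal.ofReal (heatK n (x - ξ) t) ≤
        ENNReal.ofReal ((4 * Real.pi * t) ^ (-(n : ℝ) / 2) * Real.exp (-(k:ℝ)^2 / 4)) := by
      intro ξ hξ
      refine ENNReal.ofReal_le_ofReal ?_
      unfold heatK
      refine mul_le_mul_of_nonneg_left ?_ hAnn
      refine Real.exp_le_exp.2 ?_
      have hge : (k:ℝ) * s ≤ dist ξ x := not_lt.1 fun h => hξ.2.2 (mem_ball.2 h)
      have hnorm : ‖x - ξ‖ = dist ξ x := by rw [← dist_eq_norm, dist_comm]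
      have hsq : (k:ℝ)^2 * t ≤ ‖x - ξ‖ ^ 2 := by
        rw [hnorm, ← hst]
        calc (k:ℝ)^2 * s^2 = ((k:ℝ)*s)^2 := by ring
          _ ≤ dist ξ x ^ 2 := by
              refine pow_le_pow_left₀ (by positivity) hge 2
      rw [neg_div, neg_div, neg_le_neg_iff, div_le_div_iff₀ (by positivity) (by positivity)]
      calc (k:ℝ)^2 * (4*t) = ((k:ℝ)^2 * t) * 4 := by ring
        _ ≤ ‖x - ξ‖^2 * 4 := by linarith
    have hμS : μ (S k) ≤ ε * ENNReal.ofReal ((((k:ℝ)+1)*s) ^ d) := by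
      have hmin0 : 0 < min (((k:ℝ)+1)*s) R := lt_min (by positivity) hR
      have hsub : S k ⊆ closedBall x (min (((k:ℝ)+1)*s) R) := by
        intro ξ hξ
        exact mem_closedBall.2 (le_min (mem_closedBall.1 hξ.2.1) (mem_closedBall.1 hξ.1))
      calc μ (S k) ≤ μ (closedBall x (min (((k:ℝ)+1)*s) R)) := measure_mono hsub
        _ ≤ ε * ENNReal.ofReal ((min (((k:ℝ)+1)*s) R) ^ d) :=
            hball _ hmin0 (min_le_right _ _)
        _ ≤ ε * ENNReal.ofReal ((((k:ℝ)+1)*s) ^ d) := by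
            refine mul_le_mul' le_rfl (ENNReal.ofReal_le_ofReal ?_)
            exact Real.rpow_le_rpow hmin0.le (min_le_left _ _) hd
    calc ∫⁻ ξ in S k, ENNReal.ofReal (heatK n (x - ξ) t) ∂μ
        ≤ ∫⁻ _ in S k, ENNReal.ofReal ((4 * Real.pi * t) ^ (-(n : ℝ) / 2) *
            Real.exp (-(k:ℝ)^2 / 4)) ∂μ := setLIntegral_mono' (hSmeas k) hconst
      _ = ENNReal.ofReal ((4 * Real.pi * t) ^ (-(n : ℝ) / 2) * Real.exp (-(k:ℝ)^2 / 4)) *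
            μ (S k) := setLIntegral_const _ _
      _ ≤ ENNReal.ofReal ((4 * Real.pi * t) ^ (-(n : ℝ) / 2) * Real.exp (-(k:ℝ)^2 / 4)) *
            (ε * ENNReal.ofReal ((((k:ℝ)+1)*s) ^ d)) := mul_le_mul' le_rfl hμS
      _ = (ENNReal.ofReal ((4 * Real.pi * t) ^ (-(n : ℝ) / 2) * t ^ (d / 2)) * ε) *
            ENNReal.ofReal (Real.exp (-(k:ℝ)^2 / 4) * ((k:ℝ) + 1) ^ d) := by
          have hsd : s ^ d = t ^ (d / 2) := by
            rw [hsdef, Real.sqrt_eq_rpow, ← Real.rpow_mul ht.le]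
            ring_nf
          have h1 : ((((k:ℝ)+1)*s) ^ d) = ((k:ℝ)+1) ^ d * t ^ (d / 2) := by
            rw [Real.mul_rpow (by positivity) hs0.le, hsd]
          rw [h1, ENNReal.ofReal_mul hAnn, ENNReal.ofReal_mul hAnn,
            ENNReal.ofReal_mul (by positivity : (0:ℝ) ≤ ((k:ℝ)+1)^d),
            ENNReal.ofReal_mul (by positivity : (0:ℝ) ≤ Real.exp (-(k:ℝ)^2/4))]
          ring
  calc ∫⁻ ξ in closedBall x R, ENNReal.ofReal (heatK n (x - ξ) t) ∂μ
      ≤ ∫⁻ ξ in ⋃ k, S k, ENNReal.ofReal (heatK n (x - ξ) t) ∂μ := lintegral_mono_set hcover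
    _ ≤ ∑' k : ℕ, ∫⁻ ξ in S k, ENNReal.ofReal (heatK n (x - ξ) t) ∂μ := lintegral_iUnion_le _ _
    _ ≤ ∑' k : ℕ, (ENNReal.ofReal ((4 * Real.pi * t) ^ (-(n : ℝ) / 2) * t ^ (d / 2)) * ε) *
          ENNReal.ofReal (Real.exp (-(k:ℝ)^2 / 4) * ((k:ℝ) + 1) ^ d) :=
        ENNReal.tsum_le_tsum step
    _ = _ := by rw [ENNReal.tsum_mul_left]

set_option maxHeartbeats 1000000 in
lemma sum_aux (d : ℝ) (hd : 0 ≤ d) (hdn : d ≤ (n:ℝ)) :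
    (∑' k : ℕ, ENNReal.ofReal (Real.exp (-(k:ℝ)^2 / 4) * ((k:ℝ) + 1) ^ d)) ≠ ⊤ := by
  set r : ℝ := Real.exp (-(1/4)) with hrdef
  have hr0 : 0 < r := Real.exp_pos _
  have hr1 : r < 1 := Real.exp_lt_one_iff.2 (by norm_num)
  have hbase : Summable (fun k : ℕ => (k:ℝ)^n * r^k) :=
    summable_pow_mul_geometric_of_norm_lt_one n (by
      rw [Real.norm_eq_abs, abs_of_pos hr0]; exact hr1)
  have hshift : Summable (fun k : ℕ => ((k+1:ℕ):ℝ)^n * r^(k+1)) :=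
    (summable_nat_add_iff 1).2 hbase
  have hg : Summable (fun k : ℕ => ((k:ℝ)+1)^n * r^k) := by
    refine (hshift.mul_left r⁻¹).congr fun k => ?_
    push_cast
    rw [pow_succ, show r⁻¹ * (((k:ℝ)+1)^n * (r^k * r)) = ((k:ℝ)+1)^n * r^k * (r⁻¹ * r) by ring,
      inv_mul_cancel₀ hr0.ne', mul_one]
  have hf : Summable (fun k : ℕ => Real.exp (-(k:ℝ)^2 / 4) * ((k:ℝ) + 1) ^ d) := by
    refine Summable.of_nonneg_of_le (fun k => by positivity) (fun k => ?_) hg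
    have h1 : Real.exp (-(k:ℝ)^2 / 4) ≤ r^k := by
      rw [hrdef, ← Real.exp_nat_mul]
      refine Real.exp_le_exp.2 ?_
      have hk : (k:ℝ) ≤ (k:ℝ)^2 := by
        rcases Nat.eq_zero_or_pos k with hk0 | hk1
        · simp [hk0]
        · have h1k : (1:ℝ) ≤ (k:ℝ) := by exact_mod_cast hk1
          rw [pow_two]
          exact le_mul_of_one_le_right (by positivity) h1k
      linarith
    have h2 : ((k:ℝ)+1) ^ d ≤ ((k:ℝ)+1) ^ (n:ℝ) :=
      Real.rpow_le_rpow_of_exponent_le (by linarith [Nat.cast_nonneg (α := ℝ) k]) hdn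
    calc Real.exp (-(k:ℝ)^2 / 4) * ((k:ℝ) + 1) ^ d
        ≤ r^k * ((k:ℝ)+1) ^ (n:ℝ) := by
          refine mul_le_mul h1 h2 (by positivity) (by positivity)
      _ = ((k:ℝ)+1)^n * r^k := by rw [Real.rpow_natCast]; ring
  rw [← ENNReal.ofReal_tsum_of_nonneg (fun k => by positivity) hf]
  exact ENNReal.ofReal_ne_top

set_option maxHeartbeats 1000000 in
lemma pointwise_limsup (α : ℝ) (hα : α ∈ Icc (0:ℝ) n)
    (μ : Measure (EuclideanSpace ℝ (Fin n)))
    (hfin : ∀ (x : EuclideanSpace ℝ (Fin n)) (t : ℝ), 0 < t →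
      (∫⁻ ξ, ENNReal.ofReal (heatK n (x - ξ) t) ∂μ) ≠ ⊤)
    (x : EuclideanSpace ℝ (Fin n))
    (hx : ∀ c : ℝ≥0∞, 0 < c → ∀ᶠ r in 𝓝[>] (0:ℝ),
      μ (closedBall x r) < c * ENNReal.ofReal (r ^ ((n:ℝ) - α))) :
    limsup (fun t : ℝ => ENNReal.ofReal (t ^ (α / 2)) *
        ∫⁻ ξ, ENNReal.ofReal (heatK n (x - ξ) t) ∂μ) (𝓝[>] (0:ℝ)) = 0 := by
  have hπ : (0:ℝ) < Real.pi := Real.pi_pos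
  set d : ℝ := (n:ℝ) - α with hddef
  have hd0 : 0 ≤ d := by simp only [hddef]; linarith [hα.2]
  have hdn : d ≤ (n:ℝ) := by simp only [hddef]; linarith [hα.1]
  set C : ℝ≥0∞ := ∑' k : ℕ, ENNReal.ofReal (Real.exp (-(k:ℝ)^2 / 4) * ((k:ℝ) + 1) ^ d)
    with hCdef
  have hCtop : C ≠ ⊤ := sum_aux d hd0 hdn
  have hCpos : 0 < C := by
    rw [hCdef, pos_iff_ne_zero, ne_eq, ENNReal.tsum_eq_zero]
    push_neg
    refine ⟨0, ?_⟩
    simp only [Nat.cast_zero]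
    simp only [ne_eq, ENNReal.ofReal_eq_zero, not_le]
    positivity
  set D : ℝ≥0∞ := ENNReal.ofReal ((4 * Real.pi) ^ (-(n:ℝ)/2)) * C with hDdef
  have hDtop : D ≠ ⊤ := ENNReal.mul_ne_top ENNReal.ofReal_ne_top hCtop
  -- finiteness of the Gaussian integral at time 2
  set M : ℝ≥0∞ := ∫⁻ ξ, ENNReal.ofReal (Real.exp (-‖x - ξ‖^2 / 8)) ∂μ with hMdef
  have hMtop : M ≠ ⊤ := by
    have h2 := hfin x 2 (by norm_num)
    have hkey : ∀ ξ : EuclideanSpace ℝ (Fin n),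
        ENNReal.ofReal (Real.exp (-‖x - ξ‖^2 / 8)) =
        ENNReal.ofReal ((4 * Real.pi * 2) ^ ((n:ℝ)/2)) *
          ENNReal.ofReal (heatK n (x - ξ) 2) := by
      intro ξ
      rw [← ENNReal.ofReal_mul (by positivity)]
      congr 1
      unfold heatK
      rw [show (4:ℝ) * 2 = 8 by norm_num]
      rw [← mul_assoc, ← Real.rpow_add (by positivity)]
      rw [show (n:ℝ)/2 + (-(n:ℝ)/2) = 0 by ring, Real.rpow_zero, one_mul]
    calc M = ∫⁻ ξ, ENNReal.ofReal ((4 * Real.pi * 2) ^ ((n:ℝ)/2)) *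
          ENNReal.ofReal (heatK n (x - ξ) 2) ∂μ := by
          rw [hMdef]; exact lintegral_congr hkey
      _ = ENNReal.ofReal ((4 * Real.pi * 2) ^ ((n:ℝ)/2)) *
          ∫⁻ ξ, ENNReal.ofReal (heatK n (x - ξ) 2) ∂μ :=
          lintegral_const_mul' _ _ ENNReal.ofReal_ne_top
      _ ≠ ⊤ := ENNReal.mul_ne_top ENNReal.ofReal_ne_top h2
  -- main step : the limsup is at most any positive finite c
  have H : ∀ c : ℝ≥0∞, 0 < c → c ≠ ⊤ →
      limsup (fun t : ℝ => ENNReal.ofReal (t ^ (α / 2)) *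
        ∫⁻ ξ, ENNReal.ofReal (heatK n (x - ξ) t) ∂μ) (𝓝[>] (0:ℝ)) ≤ c := by
    intro c hc0 hctop
    set ε : ℝ≥0∞ := c / 2 / D with hεdef
    have hε0 : 0 < ε := ENNReal.div_pos (ENNReal.half_pos hc0.ne').ne' hDtop
    have hDε : D * ε ≤ c / 2 := by
      rw [hεdef]
      exact ENNReal.mul_div_le
    obtain ⟨R', hR', hsubR⟩ := mem_nhdsGT_iff_exists_Ioo_subset.1 (hx ε hε0)
    rw [mem_Ioi] at hR'
    set R : ℝ := min R' 2 / 2 with hRdef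
    have hR0 : 0 < R := by positivity
    have hR1 : R ≤ 1 := by
      rw [hRdef]
      have : min R' 2 ≤ 2 := min_le_right _ _
      linarith
    have hRR' : R < R' := by
      rw [hRdef]
      have h1 : min R' 2 ≤ R' := min_le_left _ _
      have h2 : 0 < min R' 2 := lt_min hR' (by norm_num)
      linarith
    have hball : ∀ r : ℝ, 0 < r → r ≤ R → μ (closedBall x r) ≤ ε * ENNReal.ofReal (r ^ d) :=
      fun r hr hrR => (hsubR ⟨hr, lt_of_le_of_lt hrR hRR'⟩).le
    -- the far-field multiplier tends to zero
    have hg : Tendsto (fun t : ℝ => ENNReal.ofReal (t ^ (α/2) *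
        ((4 * Real.pi * t) ^ (-(n:ℝ)/2) * Real.exp (-R^2 / (8*t)))) * M) (𝓝[>] (0:ℝ)) (𝓝 0) := by
      have hF : Tendsto (fun y : ℝ => (4 * Real.pi) ^ (-(n:ℝ)/2) *
          (y ^ (((n:ℝ) - α)/2) * Real.exp (-(R^2/8) * y))) atTop (𝓝 0) := by
        have := tendsto_rpow_mul_exp_neg_mul_atTop_nhds_zero (((n:ℝ) - α)/2) (R^2/8)
          (by positivity)
        have h2 := this.const_mul ((4 * Real.pi) ^ (-(n:ℝ)/2))
        rwa [mul_zero] at h2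
      have hcomp := hF.comp tendsto_inv_nhdsGT_zero
      have hreal : Tendsto (fun t : ℝ => t ^ (α/2) *
          ((4 * Real.pi * t) ^ (-(n:ℝ)/2) * Real.exp (-R^2 / (8*t)))) (𝓝[>] (0:ℝ)) (𝓝 0) := by
        refine hcomp.congr' ?_
        filter_upwards [self_mem_nhdsWithin] with t ht
        rw [mem_Ioi] at ht
        show (4 * Real.pi) ^ (-(n:ℝ)/2) *
          ((t⁻¹) ^ (((n:ℝ) - α)/2) * Real.exp (-(R^2/8) * t⁻¹)) = _
        have e1 : (t⁻¹) ^ (((n:ℝ) - α)/2) = t ^ ((α - (n:ℝ))/2) := by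
          rw [Real.inv_rpow ht.le, ← Real.rpow_neg ht.le]
          ring_nf
        have e2 : -(R^2/8) * t⁻¹ = -R^2 / (8*t) := by
          field_simp
        have e3 : (4 * Real.pi * t) ^ (-(n:ℝ)/2) =
            (4 * Real.pi) ^ (-(n:ℝ)/2) * t ^ (-(n:ℝ)/2) :=
          Real.mul_rpow (by positivity) ht.le
        have e4 : t ^ (α/2) * t ^ (-(n:ℝ)/2) = t ^ ((α - (n:ℝ))/2) := by
          rw [← Real.rpow_add ht]
          congr 1
          ring
        rw [e1, e2, e3]
        calc (4 * Real.pi) ^ (-(n:ℝ)/2) * (t ^ ((α - (n:ℝ))/2) * Real.exp (-R^2 / (8*t)))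
            = (t ^ ((α - (n:ℝ))/2)) * ((4 * Real.pi) ^ (-(n:ℝ)/2) *
                Real.exp (-R^2 / (8*t))) := by ring
          _ = t ^ (α/2) * ((4 * Real.pi) ^ (-(n:ℝ)/2) * t ^ (-(n:ℝ)/2) *
              Real.exp (-R^2 / (8*t))) := by rw [← e4]; ring
      have h0 : Tendsto (fun t : ℝ => ENNReal.ofReal (t ^ (α/2) *
          ((4 * Real.pi * t) ^ (-(n:ℝ)/2) * Real.exp (-R^2 / (8*t))))) (𝓝[>] (0:ℝ)) (𝓝 0) := by
        rw [← ENNReal.ofReal_zero]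
        exact ENNReal.tendsto_ofReal hreal
      have := ENNReal.Tendsto.mul_const h0 (Or.inr hMtop)
      rwa [zero_mul] at this
    have hev : ∀ᶠ t in 𝓝[>] (0:ℝ), ENNReal.ofReal (t ^ (α / 2)) *
        (∫⁻ ξ, ENNReal.ofReal (heatK n (x - ξ) t) ∂μ) ≤ c := by
      have hhalf : (0:ℝ≥0∞) < c / 2 := ENNReal.half_pos hc0.ne'
      filter_upwards [Ioo_mem_nhdsGT_of_mem (by constructor <;> norm_num : (0:ℝ) ∈ Ico (0:ℝ) 1),
        hg.eventually_lt_const hhalf] with t htIoo hfar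
      obtain ⟨ht, ht1⟩ := htIoo
      -- split the integral
      rw [← lintegral_add_compl (fun ξ => ENNReal.ofReal (heatK n (x - ξ) t))
        (measurableSet_closedBall (x := x) (ε := R)), mul_add]
      have hnear : ENNReal.ofReal (t ^ (α / 2)) *
          ∫⁻ ξ in closedBall x R, ENNReal.ofReal (heatK n (x - ξ) t) ∂μ ≤ c / 2 := by
        refine le_trans (mul_le_mul' le_rfl
          (near_bound μ x d hd0 ε R t ht hR0 hball)) ?_
        have e5 : t ^ (α/2) * ((4 * Real.pi * t) ^ (-(n:ℝ)/2) * t ^ (d/2)) =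
            (4 * Real.pi) ^ (-(n:ℝ)/2) := by
          rw [Real.mul_rpow (by positivity) ht.le]
          have e6 : t ^ (α/2) * t ^ (-(n:ℝ)/2) * t ^ (d/2) = 1 := by
            rw [← Real.rpow_add ht, ← Real.rpow_add ht,
              show α/2 + -(n:ℝ)/2 + d/2 = 0 by rw [hddef]; ring, Real.rpow_zero]
          calc t ^ (α/2) * ((4 * Real.pi) ^ (-(n:ℝ)/2) * t ^ (-(n:ℝ)/2) * t ^ (d/2))
              = (4 * Real.pi) ^ (-(n:ℝ)/2) * (t ^ (α/2) * t ^ (-(n:ℝ)/2) * t ^ (d/2)) := by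
                ring
            _ = (4 * Real.pi) ^ (-(n:ℝ)/2) := by rw [e6, mul_one]
        calc ENNReal.ofReal (t ^ (α / 2)) *
            (ENNReal.ofReal ((4 * Real.pi * t) ^ (-(n:ℝ)/2) * t ^ (d/2)) * ε * C)
            = ENNReal.ofReal (t ^ (α/2) * ((4 * Real.pi * t) ^ (-(n:ℝ)/2) * t ^ (d/2))) *
              ε * C := by
              rw [ENNReal.ofReal_mul
                (q := (4 * Real.pi * t) ^ (-(n:ℝ)/2) * t ^ (d/2)) (by positivity),
                ← mul_assoc, ← mul_assoc]
          _ = D * ε := by rw [e5, hDdef, mul_right_comm]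
          _ ≤ c / 2 := hDε
      have hfar' : ENNReal.ofReal (t ^ (α / 2)) *
          ∫⁻ ξ in (closedBall x R)ᶜ, ENNReal.ofReal (heatK n (x - ξ) t) ∂μ ≤ c / 2 := by
        have hpt : ∀ ξ ∈ (closedBall x R)ᶜ, ENNReal.ofReal (heatK n (x - ξ) t) ≤
            ENNReal.ofReal ((4 * Real.pi * t) ^ (-(n:ℝ)/2) * Real.exp (-R^2 / (8*t))) *
              ENNReal.ofReal (Real.exp (-‖x - ξ‖^2 / 8)) := by
          intro ξ hξ
          rw [← ENNReal.ofReal_mul (by positivity)]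
          refine ENNReal.ofReal_le_ofReal ?_
          have hdist : R < dist ξ x := by
            by_contra hcon
            exact hξ (mem_closedBall.2 (not_lt.1 hcon))
          have hnorm : ‖x - ξ‖ = dist ξ x := by rw [← dist_eq_norm, dist_comm]
          have hR2 : R^2 ≤ ‖x - ξ‖^2 := by
            rw [hnorm]
            exact pow_le_pow_left₀ hR0.le hdist.le 2
          have harg : -‖x - ξ‖^2/(4*t) ≤ -R^2/(8*t) + -‖x - ξ‖^2/8 := by
            rw [div_add_div _ _ (by positivity : (8:ℝ)*t ≠ 0) (by norm_num : (8:ℝ) ≠ 0),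
              div_le_div_iff₀ (by positivity) (by positivity)]
            nlinarith [mul_le_mul_of_nonneg_right hR2 ht.le,
              mul_le_mul_of_nonneg_right ht1.le
                (mul_nonneg ht.le (sq_nonneg ‖x - ξ‖))]
          calc heatK n (x - ξ) t
              = (4*Real.pi*t)^(-(n:ℝ)/2) * Real.exp (-‖x - ξ‖^2 / (4*t)) := rfl
            _ ≤ (4*Real.pi*t)^(-(n:ℝ)/2) * Real.exp (-R^2/(8*t) + -‖x - ξ‖^2/8) :=
                mul_le_mul_of_nonneg_left (Real.exp_le_exp.2 harg)
                  (Real.rpow_nonneg (by positivity) _)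
            _ = (4 * Real.pi * t) ^ (-(n:ℝ)/2) * Real.exp (-R^2 / (8*t)) *
                Real.exp (-‖x - ξ‖^2 / 8) := by
                rw [Real.exp_add, ← mul_assoc]
        calc ENNReal.ofReal (t ^ (α / 2)) *
            ∫⁻ ξ in (closedBall x R)ᶜ, ENNReal.ofReal (heatK n (x - ξ) t) ∂μ
            ≤ ENNReal.ofReal (t ^ (α / 2)) *
              ∫⁻ ξ in (closedBall x R)ᶜ,
                (ENNReal.ofReal ((4 * Real.pi * t) ^ (-(n:ℝ)/2) * Real.exp (-R^2 / (8*t))) *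
                  ENNReal.ofReal (Real.exp (-‖x - ξ‖^2 / 8))) ∂μ :=
              mul_le_mul' le_rfl (setLIntegral_mono' measurableSet_closedBall.compl hpt)
          _ = ENNReal.ofReal (t ^ (α / 2)) *
              (ENNReal.ofReal ((4 * Real.pi * t) ^ (-(n:ℝ)/2) * Real.exp (-R^2 / (8*t))) *
                ∫⁻ ξ in (closedBall x R)ᶜ, ENNReal.ofReal (Real.exp (-‖x - ξ‖^2 / 8)) ∂μ) := by
              rw [lintegral_const_mul' _ _ ENNReal.ofReal_ne_top]
          _ ≤ ENNReal.ofReal (t ^ (α / 2)) *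
              (ENNReal.ofReal ((4 * Real.pi * t) ^ (-(n:ℝ)/2) * Real.exp (-R^2 / (8*t))) * M) :=
              mul_le_mul' le_rfl (mul_le_mul' le_rfl (setLIntegral_le_lintegral _ _))
          _ = ENNReal.ofReal (t ^ (α/2) *
              ((4 * Real.pi * t) ^ (-(n:ℝ)/2) * Real.exp (-R^2 / (8*t)))) * M := by
              rw [ENNReal.ofReal_mul
                (q := (4 * Real.pi * t) ^ (-(n:ℝ)/2) * Real.exp (-R^2 / (8*t)))
                (by positivity)]
              exact (mul_assoc _ _ _).symm
          _ ≤ c / 2 := hfar.le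
      calc ENNReal.ofReal (t ^ (α / 2)) *
            ∫⁻ ξ in closedBall x R, ENNReal.ofReal (heatK n (x - ξ) t) ∂μ +
          ENNReal.ofReal (t ^ (α / 2)) *
            ∫⁻ ξ in (closedBall x R)ᶜ, ENNReal.ofReal (heatK n (x - ξ) t) ∂μ
          ≤ c / 2 + c / 2 := add_le_add hnear hfar'
        _ = c := ENNReal.add_halves c
    exact limsup_le_of_le (by isBoundedDefault) hev
  by_contra hL
  set L := limsup (fun t : ℝ => ENNReal.ofReal (t ^ (α / 2)) *
      ∫⁻ ξ, ENNReal.ofReal (heatK n (x - ξ) t) ∂μ) (𝓝[>] (0:ℝ)) with hLdef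
  rcases eq_or_ne L ⊤ with htop | hne
  · have := H 1 one_pos ENNReal.one_ne_top
    rw [htop] at this
    exact absurd this (by simp)
  · have h2 : L / 2 ≠ ⊤ :=
      ((ENNReal.half_lt_self hL hne).trans (lt_top_iff_ne_top.2 hne)).ne
    have := H (L/2) (ENNReal.half_pos hL) h2
    exact absurd this (not_le.2 (ENNReal.half_lt_self hL hne))

theorem stmt5 (n : ℕ) (α : ℝ) (hα : α ∈ Icc (0 : ℝ) n)
    (μ : Measure (EuclideanSpace ℝ (Fin n)))
    (hfin : ∀ (x : EuclideanSpace ℝ (Fin n)) (t : ℝ), 0 < t →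
      (∫⁻ ξ, ENNReal.ofReal (heatK n (x - ξ) t) ∂μ) ≠ ⊤) :
    dimH {x : EuclideanSpace ℝ (Fin n) |
        0 < limsup (fun t : ℝ =>
            ENNReal.ofReal (t ^ (α / 2)) *
              ∫⁻ ξ, ENNReal.ofReal (heatK n (x - ξ) t) ∂μ)
          (nhdsWithin 0 (Ioi 0))} ≤ ENNReal.ofReal ((n : ℝ) - α) := by
  have hd0 : (0:ℝ) ≤ (n:ℝ) - α := by linarith [hα.2]
  have hν : ∀ j : ℕ, μ (closedBall (0:EuclideanSpace ℝ (Fin n)) (j+1)) ≠ ⊤ := by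
    intro j heq
    set κ : ℝ := (4*Real.pi*1) ^ (-(n:ℝ)/2) * Real.exp (-((j:ℝ)+1)^2 / (4*1)) with hκdef
    have hκ0 : 0 < κ := by positivity
    have hint : ENNReal.ofReal κ * μ (closedBall (0:EuclideanSpace ℝ (Fin n)) (j+1)) ≤
        ∫⁻ ξ, ENNReal.ofReal (heatK n (0 - ξ) 1) ∂μ := by
      calc ENNReal.ofReal κ * μ (closedBall (0:EuclideanSpace ℝ (Fin n)) (j+1))
          = ∫⁻ _ in closedBall (0:EuclideanSpace ℝ (Fin n)) (j+1), ENNReal.ofReal κ ∂μ :=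
            (setLIntegral_const _ _).symm
        _ ≤ ∫⁻ ξ in closedBall (0:EuclideanSpace ℝ (Fin n)) (j+1),
              ENNReal.ofReal (heatK n (0 - ξ) 1) ∂μ := by
            refine setLIntegral_mono' measurableSet_closedBall fun ξ hξ => ?_
            refine ENNReal.ofReal_le_ofReal ?_
            rw [hκdef]
            unfold heatK
            refine mul_le_mul_of_nonneg_left ?_ (Real.rpow_nonneg (by positivity) _)
            refine Real.exp_le_exp.2 ?_
            rw [neg_div, neg_div, neg_le_neg_iff]
            refine (div_le_div_iff_of_pos_right (by norm_num)).2 ?_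
            have hnorm : ‖(0:EuclideanSpace ℝ (Fin n)) - ξ‖ = ‖ξ‖ := by
              rw [zero_sub, norm_neg]
            rw [hnorm]
            have hle : ‖ξ‖ ≤ (j:ℝ) + 1 := by
              have := mem_closedBall_zero_iff.1 hξ
              linarith
            exact pow_le_pow_left₀ (norm_nonneg _) hle 2
        _ ≤ ∫⁻ ξ, ENNReal.ofReal (heatK n (0 - ξ) 1) ∂μ := setLIntegral_le_lintegral _ _
    rw [heq, ENNReal.mul_top (by
      simp only [ne_eq, ENNReal.ofReal_eq_zero, not_le]
      exact hκ0)] at hint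
    exact hfin 0 1 one_pos (top_le_iff.1 hint)
  have hsub : {x : EuclideanSpace ℝ (Fin n) |
      0 < limsup (fun t : ℝ => ENNReal.ofReal (t ^ (α / 2)) *
        ∫⁻ ξ, ENNReal.ofReal (heatK n (x - ξ) t) ∂μ) (nhdsWithin 0 (Ioi 0))} ⊆
      {x : EuclideanSpace ℝ (Fin n) | ∃ c : ℝ≥0∞, 0 < c ∧
        ∃ᶠ r in 𝓝[>] (0:ℝ), c * ENNReal.ofReal (r ^ ((n:ℝ) - α)) ≤ μ (closedBall x r)} := by
    intro x hx
    by_contra hxE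
    rw [Set.mem_setOf_eq] at hxE
    push_neg at hxE
    have hx' : ∀ c : ℝ≥0∞, 0 < c → ∀ᶠ r in 𝓝[>] (0:ℝ),
        μ (closedBall x r) < c * ENNReal.ofReal (r ^ ((n:ℝ) - α)) := by
      intro c hc
      have h1 := hxE c hc
      exact h1
    have hzero := pointwise_limsup α hα μ hfin x hx'
    rw [Set.mem_setOf_eq, hzero] at hx
    exact lt_irrefl _ hx
  exact le_trans (dimH_mono hsub) (frostman ((n:ℝ) - α) hd0 μ hν)
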